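/- For the scalar system ẋ(t) = x(t) + d(t) with admissible disturbances |d(t)| ≤ 1 and constraint x ≤ 0, the barrier point x̄ = −1 admits no admissible disturbance that keeps the trajectory on the barrier and reaches the constraint boundary in finite time: every solution from x₀ = −1 satisfies x(t) ≤ −1 for all t ≥ 0, hence there is no admissible d and finite t̄ > 0 with x(t̄) = 0. Moreover, (A6) fails for this system: for every finite T ≥ 0 the finite-horizon set M_T = {x₀ : every admissible solution from x₀ satisfies x(t) ≤ 0 for all t ∈ [0, T]} equals (−∞, e^(−T) − 1] and is strictly larger than M = (−∞, −1]. -/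

import Mathlib

open MeasureTheory Set

/-- An admissible disturbance for the scalar example: Lebesgue measurable with
`|d t| ≤ 1` on `[0, ∞)`. -/
def AdmScalar (d : ℝ → ℝ) : Prop :=
  Measurable d ∧ ∀ t, 0 ≤ t → |d t| ≤ 1

/-- A solution of the scalar system `ẋ = x + d` from `x₀` under `d`: an (absolutely
continuous) function satisfying `x t = x₀ + ∫₀ᵗ (x s + d s) ds` for all `t ≥ 0`. -/
def ScalarSol (d : ℝ → ℝ) (x₀ : ℝ) (x : ℝ → ℝ) : Prop :=
  x 0 = x₀ ∧ ∀ t, 0 ≤ t →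
    IntervalIntegrable (fun s => x s + d s) volume 0 t ∧
    x t = x₀ + ∫ s in (0:ℝ)..t, (x s + d s)

/-- Continuity of the primitive on `[0, ∞)`. -/
lemma primContAux (f : ℝ → ℝ) (hf : ∀ t, 0 ≤ t → IntervalIntegrable f volume 0 t) :
    ContinuousOn (fun b => ∫ s in (0:ℝ)..b, f s) (Ici 0) := by
  intro t ht
  have ht0 : (0:ℝ) ≤ t := ht
  have h1 : ContinuousOn (fun b => ∫ s in (0:ℝ)..b, f s) (uIcc 0 (t + 1)) :=
    intervalIntegral.continuousOn_primitive_interval' (hf (t + 1) (by linarith))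
      left_mem_uIcc
  have huIcc : uIcc (0:ℝ) (t+1) = Icc 0 (t+1) := uIcc_of_le (by linarith)
  have hmem : Icc (0:ℝ) (t+1) ∈ nhdsWithin t (Ici 0) := by
    have he : Icc (0:ℝ) (t+1) = Ici 0 ∩ Iic (t+1) := (Ici_inter_Iic).symm
    rw [he]
    exact inter_mem_nhdsWithin _ (Iic_mem_nhds (by linarith))
  exact (h1 t (by rw [huIcc]; exact ⟨ht0, by linarith⟩)).mono_of_mem_nhdsWithin (by rwa [huIcc])

/-- Grönwall-type upper bound: if `d ≤ 1` on `[0,∞)`, any solution of `ẋ = x + d`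
from `x₀` satisfies `x t ≤ (x₀+1) eᵗ − 1`. -/
lemma scalarUpper (d x : ℝ → ℝ) (x₀ : ℝ) (hd : ∀ t, 0 ≤ t → d t ≤ 1)
    (hs : ScalarSol d x₀ x) : ∀ t, 0 ≤ t → x t ≤ (x₀ + 1) * Real.exp t - 1 := by
  obtain ⟨hx0, hsol⟩ := hs
  have hfint : ∀ t, 0 ≤ t → IntervalIntegrable (fun s => x s + d s) volume 0 t :=
    fun t ht => (hsol t ht).1
  have hxcont : ContinuousOn x (Ici 0) := by
    have h1 : ContinuousOn (fun b => x₀ + ∫ s in (0:ℝ)..b, (x s + d s)) (Ici 0) :=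
      continuousOn_const.add (primContAux _ hfint)
    exact h1.congr fun t ht => (hsol t ht).2
  have hxint : ∀ t, 0 ≤ t → IntervalIntegrable x volume 0 t := by
    intro t ht
    apply ContinuousOn.intervalIntegrable
    apply hxcont.mono
    rw [uIcc_of_le ht]
    exact Icc_subset_Ici_self
  have hdint : ∀ t, 0 ≤ t → IntervalIntegrable d volume 0 t := by
    intro t ht
    have h := (hfint t ht).sub (hxint t ht)
    simpa using h
  set u : ℝ → ℝ := fun b => ∫ s in (0:ℝ)..b, x s with hu_def
  set Dd : ℝ → ℝ := fun b => ∫ s in (0:ℝ)..b, d s with hDd_def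
  have hdecomp : ∀ t, 0 ≤ t → x t = x₀ + u t + Dd t := by
    intro t ht
    rw [(hsol t ht).2, intervalIntegral.integral_add (hxint t ht) (hdint t ht)]
    simp [hu_def, hDd_def]
    ring
  have hDle : ∀ t, 0 ≤ t → Dd t ≤ t := by
    intro t ht
    have h1 : Dd t ≤ ∫ s in (0:ℝ)..t, (1:ℝ) := by
      apply intervalIntegral.integral_mono_on ht (hdint t ht) intervalIntegrable_const
      intro s hsmem
      exact hd s hsmem.1
    simpa using h1
  have hucont : ContinuousOn u (Ici 0) := primContAux x hxint
  have hu' : ∀ t ∈ Ioi (0:ℝ), HasDerivAt u (x t) t := by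
    intro t ht
    have hca : ContinuousAt x t :=
      (hxcont t (mem_Ici.mpr (le_of_lt ht))).continuousAt (Ici_mem_nhds ht)
    have hmeas : StronglyMeasurableAtFilter x (nhds t) volume :=
      ContinuousOn.stronglyMeasurableAtFilter isOpen_Ioi
        (hxcont.mono Ioi_subset_Ici_self) t ht
    exact intervalIntegral.integral_hasDerivAt_right (hxint t (le_of_lt ht)) hmeas hca
  have hexp' : ∀ t : ℝ, HasDerivAt (fun s : ℝ => Real.exp (-s)) (-Real.exp (-t)) t := by
    intro t
    have h := (Real.hasDerivAt_exp (-t)).comp t (hasDerivAt_neg' t)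
    simpa [Function.comp_def] using h
  set φ : ℝ → ℝ := fun s => Real.exp (-s) * (x₀ + s) - Real.exp (-s) * (x s - u s) with hφ_def
  have hh' : ∀ t ∈ Ioi (0:ℝ),
      HasDerivAt (fun s => ((x₀ + 1) * (1 - Real.exp (-s)) - s * Real.exp (-s))
        - Real.exp (-s) * u s) (φ t) t := by
    intro t ht
    have hB : HasDerivAt (fun s => (x₀ + 1) * (1 - Real.exp (-s)) - s * Real.exp (-s))
        (Real.exp (-t) * (x₀ + t)) t := by
      have h1 : HasDerivAt (fun s => (x₀ + 1) * (1 - Real.exp (-s)))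
          ((x₀ + 1) * (0 - -Real.exp (-t))) t :=
        ((hasDerivAt_const t (1:ℝ)).sub (hexp' t)).const_mul (x₀ + 1)
      have h2 : HasDerivAt (fun s : ℝ => s * Real.exp (-s))
          (1 * Real.exp (-t) + t * -Real.exp (-t)) t :=
        (hasDerivAt_id t).mul (hexp' t)
      have h3 := h1.sub h2
      refine h3.congr_deriv ?_
      ring
    have hg : HasDerivAt (fun s => Real.exp (-s) * u s)
        (-Real.exp (-t) * u t + Real.exp (-t) * x t) t := (hexp' t).mul (hu' t ht)
    have h4 := hB.sub hg
    refine h4.congr_deriv ?_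
    simp only [hφ_def]
    ring
  have hφ0 : ∀ t ∈ Ioi (0:ℝ), 0 ≤ φ t := by
    intro t ht
    have h1 : x t - u t = x₀ + Dd t := by
      rw [hdecomp t ht.le]; ring
    have h2 : Dd t ≤ t := hDle t ht.le
    have h3 : x t - u t ≤ x₀ + t := by rw [h1]; linarith
    have hE := Real.exp_pos (-t)
    simp only [hφ_def]
    nlinarith
  have hmono : MonotoneOn (fun s => ((x₀ + 1) * (1 - Real.exp (-s)) - s * Real.exp (-s))
      - Real.exp (-s) * u s) (Ici 0) := by
    apply monotoneOn_of_hasDerivWithinAt_nonneg (convex_Ici 0) (f' := φ)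
    · apply ContinuousOn.sub
      · exact (((continuous_const.mul (continuous_const.sub
          (Real.continuous_exp.comp continuous_neg))).sub
          (continuous_id.mul (Real.continuous_exp.comp continuous_neg)))).continuousOn
      · exact ((Real.continuous_exp.comp continuous_neg).continuousOn).mul hucont
    · intro s hsmem
      rw [interior_Ici] at hsmem
      exact (hh' s hsmem).hasDerivWithinAt
    · intro s hsmem
      rw [interior_Ici] at hsmem
      exact hφ0 s hsmem
  intro t ht
  rcases eq_or_lt_of_le ht with rfl | htpos
  · have : x 0 = x₀ := hx0
    simp [this, Real.exp_zero]
  · have h0 := hmono (self_mem_Ici) (mem_Ici.mpr ht) ht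
    have hu0 : u 0 = 0 := by simp [hu_def]
    have hz : ((x₀ + 1) * (1 - Real.exp (-(0:ℝ))) - (0:ℝ) * Real.exp (-(0:ℝ)))
        - Real.exp (-(0:ℝ)) * u 0 = 0 := by
      simp [hu0]
    simp only at h0
    have key : Real.exp (-t) * u t ≤ (x₀ + 1) * (1 - Real.exp (-t)) - t * Real.exp (-t) := by
      rw [hz] at h0
      linarith
    have hEe : Real.exp t * Real.exp (-t) = 1 := by
      rw [← Real.exp_add]; simp
    have h2 := mul_le_mul_of_nonneg_left key (Real.exp_pos t).le
    have h3 : Real.exp t * (Real.exp (-t) * u t) = u t := by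
      rw [← mul_assoc, hEe, one_mul]
    have h4 : Real.exp t * ((x₀ + 1) * (1 - Real.exp (-t)) - t * Real.exp (-t))
        = (x₀ + 1) * (Real.exp t - 1) - t := by
      linear_combination (-(x₀ + 1 + t)) * hEe
    rw [h3, h4] at h2
    have hxeq := hdecomp t ht
    have hDt := hDle t ht
    rw [hxeq]
    linarith

/-- The explicit solution under `d ≡ 1`. -/
lemma expSolAux (x₀ : ℝ) :
    ScalarSol (fun _ => 1) x₀ (fun t => (x₀ + 1) * Real.exp t - 1) := by
  constructor
  · simp
  · intro t ht
    have heq : (fun s => ((x₀ + 1) * Real.exp s - 1) + (1:ℝ))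
        = fun s => (x₀ + 1) * Real.exp s := by
      funext s; ring
    constructor
    · rw [heq]
      exact (continuous_const.mul Real.continuous_exp).intervalIntegrable 0 t
    · rw [heq, intervalIntegral.integral_const_mul, integral_exp]
      simp [Real.exp_zero]
      ring

/-- for `ẋ = x + d`, `|d| ≤ 1`, constraint `x ≤ 0`: every admissible solution
from the barrier point `x₀ = −1` satisfies `x t ≤ −1` for all `t ≥ 0`; hence no admissible
disturbance steers the barrier point to the constraint boundary in finite time. Moreover
(A6) fails: for every finite `T ≥ 0` the finite-horizon set `M_T` equals
`(−∞, e^(−T) − 1]`, which is strictly larger than `M = (−∞, −1]`. -/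
theorem scalar_barrier_never_reaches_boundary :
    (∀ (d : ℝ → ℝ) (x : ℝ → ℝ), AdmScalar d → ScalarSol d (-1) x →
      ∀ t, 0 ≤ t → x t ≤ -1) ∧
    (¬ ∃ (d : ℝ → ℝ) (x : ℝ → ℝ) (tb : ℝ), AdmScalar d ∧ ScalarSol d (-1) x ∧
      0 < tb ∧ x tb = 0) ∧
    (∀ T : ℝ, 0 ≤ T →
      {x₀ : ℝ | ∀ (d : ℝ → ℝ) (x : ℝ → ℝ), AdmScalar d → ScalarSol d x₀ x →
        ∀ t ∈ Icc (0:ℝ) T, x t ≤ 0} = Iic (Real.exp (-T) - 1) ∧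
      Iic (-1 : ℝ) ⊂ Iic (Real.exp (-T) - 1)) := by
  have part1 : ∀ (d : ℝ → ℝ) (x : ℝ → ℝ), AdmScalar d → ScalarSol d (-1) x →
      ∀ t, 0 ≤ t → x t ≤ -1 := by
    intro d x hd hs t ht
    have h := scalarUpper d x (-1) (fun s hs0 => (abs_le.mp (hd.2 s hs0)).2) hs t ht
    have : ((-1:ℝ) + 1) * Real.exp t - 1 = -1 := by ring
    linarith
  refine ⟨part1, ?_, ?_⟩
  · rintro ⟨d, x, tb, hd, hs, htb, hxtb⟩
    have h := part1 d x hd hs tb htb.le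
    rw [hxtb] at h
    norm_num at h
  · intro T hT
    constructor
    · ext x₀
      simp only [mem_setOf_eq, mem_Iic]
      constructor
      · intro h
        have hadm : AdmScalar (fun _ => (1:ℝ)) := ⟨measurable_const, fun t _ => by norm_num⟩
        have hle := h _ _ hadm (expSolAux x₀) T ⟨hT, le_refl T⟩
        have hEe : Real.exp T * Real.exp (-T) = 1 := by rw [← Real.exp_add]; simp
        have h4 : Real.exp (-T) * ((x₀ + 1) * Real.exp T - 1) = (x₀ + 1) - Real.exp (-T) := by
          linear_combination (x₀ + 1) * hEe
        have h3 : Real.exp (-T) * ((x₀ + 1) * Real.exp T - 1) ≤ 0 :=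
          mul_nonpos_of_nonneg_of_nonpos (Real.exp_pos (-T)).le (by simpa using hle)
        rw [h4] at h3
        linarith
      · intro hx0 d x hd hs t htmem
        have hup := scalarUpper d x x₀ (fun s hs0 => (abs_le.mp (hd.2 s hs0)).2) hs t htmem.1
        have h1 : x₀ + 1 ≤ Real.exp (-T) := by linarith
        have h2 : (x₀ + 1) * Real.exp t ≤ Real.exp (-T) * Real.exp t :=
          mul_le_mul_of_nonneg_right h1 (Real.exp_pos t).le
        have h3 : Real.exp (-T) * Real.exp t = Real.exp (t - T) := by
          rw [← Real.exp_add]; ring_nf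
        have h4 : Real.exp (t - T) ≤ 1 := Real.exp_le_one_iff.mpr (by linarith [htmem.2])
        linarith
    · have hsub : Iic (-1 : ℝ) ⊆ Iic (Real.exp (-T) - 1) :=
        Iic_subset_Iic.mpr (by linarith [Real.exp_pos (-T)])
      refine (Set.ssubset_iff_of_subset hsub).mpr ?_
      refine ⟨Real.exp (-T) - 1, mem_Iic.mpr le_rfl, ?_⟩
      simp only [mem_Iic, not_le]
      linarith [Real.exp_pos (-T)]
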